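/- The Lascoux coefficients satisfy: for i < j, ψ_{{i,j}} = ∑_{k=i+1}^{j} C(i+j, k), where ψ is defined by the expansion h_d({x_a+x_b : 1 ≤ a ≤ b ≤ 2}) = ∑_{λ(I) ⊢ d, #I = 2} ψ_I s_{λ(I)}(x_1, x_2). -/

import Mathlib

open scoped BigOperators

/-- The complete homogeneous symmetric polynomial of degree `d` in `r` variables. -/
def hsym (r d : ℕ) (x : Fin r → ℚ) : ℚ :=
  ∑ c ∈ (Fintype.piFinset fun _ : Fin r => Finset.range (d + 1)).filter
      (fun c => ∑ i, c i = d), ∏ i, x i ^ c i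

/-- The Schur polynomial `s_{(a,b)}(x,y) = ∑_{k=0}^{a-b} x^{b+k} y^{a-k}` in two variables,
for a partition `(a, b)` with `b ≤ a`. -/
def schur2 (a b : ℕ) (x y : ℚ) : ℚ :=
  ∑ k ∈ Finset.range (a - b + 1), x ^ (b + k) * y ^ (a - k)

namespace Stmt7Aux

open Finset

/-! ### Combinatorial lemmas -/

def PP (d j : ℕ) : ℕ := ∑ k ∈ range (j + 1), (d + 1).choose k

def GG (d i : ℕ) : ℤ := (PP d (d + 1 - i) : ℤ) - (PP d i : ℤ)

def psiN (d i : ℕ) : ℕ := ∑ k ∈ Finset.Icc (i + 1) (d + 1 - i), (d + 1).choose k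

lemma PP_succ (d j : ℕ) : PP d (j + 1) = PP d j + (d + 1).choose (j + 1) := by
  unfold PP; rw [Finset.sum_range_succ]

lemma PP_top (d : ℕ) : PP d (d + 1) = 2 ^ (d + 1) := by
  unfold PP; exact Nat.sum_range_choose (d + 1)

lemma PP_zero (d : ℕ) : PP d 0 = 1 := by simp [PP]

lemma PP_above (d j : ℕ) (h : d + 1 ≤ j) : PP d j = 2 ^ (d + 1) := by
  unfold PP
  rw [← Nat.sum_range_choose (d + 1)]
  symm
  apply Finset.sum_subset
  · intro k hk; simp only [mem_range] at *; omega
  · intro k _ hk; simp only [mem_range] at hk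
    exact Nat.choose_eq_zero_of_lt (by omega)

lemma psiN_eq (d i : ℕ) (h : 2 * i ≤ d + 1) : PP d i + psiN d i = PP d (d + 1 - i) := by
  unfold PP psiN
  rw [show Finset.Icc (i + 1) (d + 1 - i) = Finset.Ico (i + 1) (d + 1 - i + 1) from
    (Finset.Ico_add_one_right_eq_Icc _ _).symm]
  rw [Finset.range_eq_Ico, Finset.range_eq_Ico]
  exact Finset.sum_Ico_consecutive (fun k => (d + 1).choose k) (by omega : 0 ≤ i + 1) (by omega : i + 1 ≤ d + 1 - i + 1)

lemma GG_zero (d : ℕ) : GG d 0 = 2 ^ (d + 1) - 1 := by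
  simp [GG, PP_top, PP_zero]

lemma GG_diff (d i : ℕ) (h1 : 1 ≤ i) (h2 : i ≤ d + 1) :
    GG d i - GG d (i - 1) = -((d + 2).choose i : ℤ) := by
  obtain ⟨j, rfl⟩ : ∃ j, i = j + 1 := ⟨i - 1, by omega⟩
  have hp : PP d (j + 1) = PP d j + (d + 1).choose (j + 1) := PP_succ d j
  have hq : PP d (d + 1 - j) = PP d (d + 1 - (j + 1)) + (d + 1).choose (d + 1 - j) := by
    rw [show d + 1 - j = (d + 1 - (j + 1)) + 1 from by omega, PP_succ,
      show d + 1 - (j + 1) + 1 = d + 1 - j from by omega]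
  have hsymm : (d + 1).choose (d + 1 - j) = (d + 1).choose j := Nat.choose_symm (by omega)
  have hpascal : (d + 2).choose (j + 1) = (d + 1).choose j + (d + 1).choose (j + 1) :=
    Nat.choose_succ_succ (d + 1) j
  rw [GG, GG]
  simp only [Nat.add_sub_cancel, show j + 1 - 1 = j from rfl]
  rw [show d + 1 - (j + 1) = d - j from by omega] at *
  push_cast [hp, hq, hsymm, hpascal]
  ring

lemma GG_neg (d i : ℕ) (h : i ≤ d + 1) : GG d (d + 1 - i) = - GG d i := by
  rw [GG, GG, show d + 1 - (d + 1 - i) = i from by omega]; ring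

lemma GG_psi (d i : ℕ) (h : 2 * i ≤ d + 1) : GG d i = (psiN d i : ℤ) := by
  have := psiN_eq d i h
  rw [GG]; omega

/-! ### Generic ring versions of `hsym` and `schur2` -/

variable {R : Type*} [CommRing R]

def hsymA (r d : ℕ) (x : Fin r → R) : R :=
  ∑ c ∈ (Fintype.piFinset fun _ : Fin r => Finset.range (d + 1)).filter
      (fun c => ∑ i, c i = d), ∏ i, x i ^ c i

def schur2A (a b : ℕ) (x y : R) : R :=
  ∑ k ∈ Finset.range (a - b + 1), x ^ (b + k) * y ^ (a - k)

lemma map_hsymA {S : Type*} [CommRing S] (φ : R →+* S) (r d : ℕ) (v : Fin r → R) :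
    φ (hsymA r d v) = hsymA r d (fun i => φ (v i)) := by
  unfold hsymA
  rw [map_sum]
  exact Finset.sum_congr rfl fun c _ => by
    rw [map_prod]
    exact Finset.prod_congr rfl fun i _ => by rw [map_pow]

lemma map_schur2A {S : Type*} [CommRing S] (φ : R →+* S) (a b : ℕ) (x y : R) :
    φ (schur2A a b x y) = schur2A a b (φ x) (φ y) := by
  unfold schur2A
  rw [map_sum]
  exact Finset.sum_congr rfl fun k _ => by rw [map_mul, map_pow, map_pow]

lemma geom'' (u v : R) (n : ℕ) :
    (∑ i ∈ range (n + 1), u ^ i * v ^ (n - i)) * (u - v) = u ^ (n + 1) - v ^ (n + 1) := by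
  simpa using geom_sum₂_mul u v (n + 1)

/-! ### The left-hand side -/

lemma hsym_eq (d : ℕ) (a b c : R) :
    hsymA 3 d ![a, b, c]
      = ∑ q ∈ range (d + 1), b ^ q * ∑ j ∈ range (d - q + 1), a ^ j * c ^ (d - q - j) := by
  unfold hsymA
  rw [Finset.sum_congr rfl (fun q _ => Finset.mul_sum _ _ _), Finset.sum_sigma']
  refine Finset.sum_nbij' (fun c => ⟨c 1, c 0⟩) (fun p => ![p.2, p.1, d - p.1 - p.2]) ?_ ?_ ?_ ?_ ?_
  · intro c hc
    simp only [mem_filter, Fintype.mem_piFinset, Fin.sum_univ_three, mem_range] at hc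
    obtain ⟨hmem, hsum⟩ := hc
    have h0 := hmem 0; have h1 := hmem 1; have h2 := hmem 2
    simp only [mem_sigma, mem_range]
    omega
  · rintro ⟨q, j⟩ hp
    simp only [mem_sigma, mem_range] at hp
    obtain ⟨hq, hj⟩ := hp
    simp only [mem_filter, Fintype.mem_piFinset, Fin.sum_univ_three]
    constructor
    · intro i
      fin_cases i <;> simp <;> omega
    · simp only [Matrix.cons_val_zero, Matrix.cons_val_one, Matrix.head_cons,
        Matrix.cons_val_two, Matrix.tail_cons]; omega
  · intro c hc
    simp only [mem_filter, Fintype.mem_piFinset, Fin.sum_univ_three, mem_range] at hc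
    obtain ⟨hmem, hsum⟩ := hc
    have h0 := hmem 0; have h1 := hmem 1; have h2 := hmem 2
    funext i
    fin_cases i <;> simp <;> omega
  · rintro ⟨q, j⟩ hp; simp
  · intro c hc
    simp only [mem_filter, Fintype.mem_piFinset, Fin.sum_univ_three, mem_range] at hc
    obtain ⟨hmem, hsum⟩ := hc
    simp only [Fin.prod_univ_three, Matrix.cons_val_zero, Matrix.cons_val_one, Matrix.head_cons,
      Matrix.cons_val_two, Matrix.tail_cons]
    have : d - c 1 - c 0 = c 2 := by omega
    rw [this]; ring

lemma closed (d : ℕ) (x y : R) :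
    2 * (x - y) ^ 2 *
        (∑ q ∈ range (d + 1), (x + y) ^ q *
          ∑ j ∈ range (d - q + 1), (2*x) ^ j * (2*y) ^ (d - q - j))
      = (2*x) ^ (d + 2) + (2*y) ^ (d + 2) - 2 * (x + y) ^ (d + 2) := by
  rw [Finset.mul_sum]
  have step1 : ∀ q ∈ range (d + 1),
      2 * (x - y) ^ 2 * ((x + y) ^ q * ∑ j ∈ range (d - q + 1), (2*x) ^ j * (2*y) ^ (d - q - j))
        = (x - y) * (2*x) * ((x + y) ^ q * (2*x) ^ (d - q))
          - (x - y) * (2*y) * ((x + y) ^ q * (2*y) ^ (d - q)) := by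
    intro q hq
    have h := geom'' (2*x) (2*y) (d - q)
    linear_combination ((x - y) * (x + y) ^ q) * h
  rw [Finset.sum_congr rfl step1, Finset.sum_sub_distrib]
  rw [← Finset.mul_sum, ← Finset.mul_sum]
  have hA := geom'' (x + y) (2*x) d
  have hC := geom'' (x + y) (2*y) d
  linear_combination (-(2*x)) * hA - (2*y) * hC

/-! ### The right-hand side -/

lemma schur_fact (d i : ℕ) (hi : 2 * i ≤ d) (x y : R) :
    schur2A (d - i) i x y * (x - y)
      = x ^ i * y ^ i * (x ^ (d - 2 * i + 1) - y ^ (d - 2 * i + 1)) := by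
  have h1 : schur2A (d - i) i x y
      = x ^ i * y ^ i * ∑ k ∈ range (d - 2 * i + 1), x ^ k * y ^ (d - 2 * i - k) := by
    unfold schur2A
    rw [show d - i - i = d - 2 * i from by omega, Finset.mul_sum]
    refine Finset.sum_congr rfl fun k hk => ?_
    simp only [mem_range] at hk
    rw [pow_add, show d - i - k = i + (d - 2 * i - k) from by omega, pow_add]
    ring
  rw [h1, mul_assoc, geom'' x y (d - 2 * i)]

lemma T_closed (d : ℕ) (x y : R) :
    (x - y) * (∑ i ∈ range (d + 2), ((GG d i : ℤ) : R) * (x ^ (d + 1 - i) * y ^ i))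
      = 2 ^ (d + 1) * x ^ (d + 2) + 2 ^ (d + 1) * y ^ (d + 2) - (x + y) ^ (d + 2) := by
  set T := ∑ i ∈ range (d + 2), ((GG d i : ℤ) : R) * (x ^ (d + 1 - i) * y ^ i) with hT
  have hx : x * T = ∑ i ∈ Finset.Ico 0 (d + 2), ((GG d i : ℤ) : R) * (x ^ (d + 2 - i) * y ^ i) := by
    rw [hT, Finset.mul_sum, ← Finset.range_eq_Ico]
    refine Finset.sum_congr rfl fun i hi => ?_
    simp only [mem_range] at hi
    rw [show d + 2 - i = (d + 1 - i) + 1 from by omega, pow_succ]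
    ring
  have hy : y * T = ∑ i ∈ Finset.Ico 1 (d + 3), ((GG d (i - 1) : ℤ) : R) * (x ^ (d + 2 - i) * y ^ i) := by
    rw [hT, Finset.mul_sum, Finset.sum_Ico_eq_sum_range]
    refine Finset.sum_congr (by norm_num) fun i hi => ?_
    simp only [Finset.mem_range] at hi
    rw [show 1 + i - 1 = i from by omega, show d + 2 - (1 + i) = d + 1 - i from by omega,
      show (1 : ℕ) + i = i + 1 from by omega, pow_succ]
    ring
  have hx' : x * T = ((GG d 0 : ℤ) : R) * (x ^ (d + 2) * y ^ 0)
      + ∑ i ∈ Finset.Ico 1 (d + 2), ((GG d i : ℤ) : R) * (x ^ (d + 2 - i) * y ^ i) := by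
    rw [hx, Finset.sum_eq_sum_Ico_succ_bot (by omega)]
    norm_num
  have hy' : y * T = ∑ i ∈ Finset.Ico 1 (d + 2), ((GG d (i - 1) : ℤ) : R) * (x ^ (d + 2 - i) * y ^ i)
      + ((GG d (d + 1) : ℤ) : R) * (x ^ 0 * y ^ (d + 2)) := by
    rw [hy, show d + 3 = (d + 2) + 1 from rfl, Finset.sum_Ico_succ_top (by omega),
      show d + 2 - 1 = d + 1 by omega, show d + 2 - (d + 2) = 0 by omega]
  have hmid : ∑ i ∈ Finset.Ico 1 (d + 2),
        (((GG d i : ℤ) : R) * (x ^ (d + 2 - i) * y ^ i)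
          - ((GG d (i - 1) : ℤ) : R) * (x ^ (d + 2 - i) * y ^ i))
      = - ∑ i ∈ Finset.Ico 1 (d + 2), (((d + 2).choose i : ℕ) : R) * (x ^ (d + 2 - i) * y ^ i) := by
    rw [← Finset.sum_neg_distrib]
    refine Finset.sum_congr rfl fun i hi => ?_
    simp only [Finset.mem_Ico] at hi
    have h := GG_diff d i (by omega) (by omega)
    have h2 : ((GG d i : ℤ) : R) - ((GG d (i - 1) : ℤ) : R) = -(((d + 2).choose i : ℕ) : R) := by
      have := congrArg (fun z : ℤ => (z : R)) h
      push_cast at this ⊢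
      linear_combination this
    linear_combination (x ^ (d + 2 - i) * y ^ i) * h2
  have hb : ∑ i ∈ Finset.Ico 1 (d + 2), (((d + 2).choose i : ℕ) : R) * (x ^ (d + 2 - i) * y ^ i)
      = (x + y) ^ (d + 2) - x ^ (d + 2) - y ^ (d + 2) := by
    have h := add_pow y x (d + 2)
    rw [Finset.range_eq_Ico, Finset.sum_eq_sum_Ico_succ_bot (by omega),
      show d + 2 + 1 = (d + 2) + 1 from rfl, Finset.sum_Ico_succ_top (by omega)] at h
    simp only [pow_zero, Nat.choose_zero_right, Nat.cast_one, mul_one, one_mul,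
      Nat.choose_self, Nat.sub_self, Nat.sub_zero, Nat.add_sub_cancel] at h
    have e : ∑ i ∈ Finset.Ico 1 (d + 2), (((d + 2).choose i : ℕ) : R) * (x ^ (d + 2 - i) * y ^ i)
        = ∑ i ∈ Finset.Ico 1 (d + 2), y ^ i * x ^ (d + 2 - i) * (((d + 2).choose i : ℕ) : R) :=
      Finset.sum_congr rfl fun i _ => by ring
    rw [e]
    linear_combination -h
  have hG0 : ((GG d 0 : ℤ) : R) = 2 ^ (d + 1) - 1 := by rw [GG_zero]; push_cast; ring
  have hGtop : ((GG d (d + 1) : ℤ) : R) = -(2 ^ (d + 1) - 1) := by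
    have h3 : GG d (d + 1) = -(2 ^ (d + 1) - 1) := by
      have h2 := GG_zero d
      have h4 : GG d (d + 1) = - GG d 0 := by
        rw [GG, GG, show d + 1 - (d + 1) = 0 from by omega, show d + 1 - 0 = d + 1 from rfl]
        ring
      rw [h4, h2]
    rw [h3]; push_cast; ring
  have key : (x - y) * T = x * T - y * T := by ring
  rw [key, hx', hy']
  rw [show ((GG d 0 : ℤ) : R) * (x ^ (d + 2) * y ^ 0)
        + (∑ i ∈ Finset.Ico 1 (d + 2), ((GG d i : ℤ) : R) * (x ^ (d + 2 - i) * y ^ i))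
      - ((∑ i ∈ Finset.Ico 1 (d + 2), ((GG d (i - 1) : ℤ) : R) * (x ^ (d + 2 - i) * y ^ i))
        + ((GG d (d + 1) : ℤ) : R) * (x ^ 0 * y ^ (d + 2)))
      = ((GG d 0 : ℤ) : R) * (x ^ (d + 2) * y ^ 0)
        - ((GG d (d + 1) : ℤ) : R) * (x ^ 0 * y ^ (d + 2))
        + ∑ i ∈ Finset.Ico 1 (d + 2),
            (((GG d i : ℤ) : R) * (x ^ (d + 2 - i) * y ^ i)
              - ((GG d (i - 1) : ℤ) : R) * (x ^ (d + 2 - i) * y ^ i)) from by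
    rw [Finset.sum_sub_distrib]; ring]
  rw [hmid, hb, hG0, hGtop]
  ring

lemma A_eq_T (d : ℕ) (x y : R) :
    ∑ i ∈ range (d / 2 + 1),
        (psiN d i : R) * (x ^ i * y ^ i * (x ^ (d - 2 * i + 1) - y ^ (d - 2 * i + 1)))
      = ∑ i ∈ range (d + 2), ((GG d i : ℤ) : R) * (x ^ (d + 1 - i) * y ^ i) := by
  set M := d / 2 with hM
  have hsplit : ∑ i ∈ range (d + 2), ((GG d i : ℤ) : R) * (x ^ (d + 1 - i) * y ^ i)
      = (∑ i ∈ range (M + 1), ((GG d i : ℤ) : R) * (x ^ (d + 1 - i) * y ^ i))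
        + ∑ i ∈ Finset.Ico (M + 1) (d + 2), ((GG d i : ℤ) : R) * (x ^ (d + 1 - i) * y ^ i) := by
    rw [range_eq_Ico, range_eq_Ico]
    exact (Finset.sum_Ico_consecutive (fun i => ((GG d i : ℤ) : R) * (x ^ (d + 1 - i) * y ^ i)) (by omega : 0 ≤ M + 1) (by omega : M + 1 ≤ d + 2)).symm
  have hmirror : ∑ i ∈ Finset.Ico (M + 1) (d + 2), ((GG d i : ℤ) : R) * (x ^ (d + 1 - i) * y ^ i)
      = ∑ j ∈ range (d + 1 - M), ((GG d (d + 1 - j) : ℤ) : R)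
          * (x ^ (d + 1 - (d + 1 - j)) * y ^ (d + 1 - j)) := by
    refine Finset.sum_nbij' (fun i => d + 1 - i) (fun j => d + 1 - j) ?_ ?_ ?_ ?_ ?_
    · intro i hi; simp only [Finset.mem_Ico, mem_range] at *; omega
    · intro j hj; simp only [Finset.mem_Ico, mem_range] at *; omega
    · intro i hi; simp only [Finset.mem_Ico] at hi; omega
    · intro j hj; simp only [mem_range] at hj; omega
    · intro i hi; simp only [Finset.mem_Ico] at hi
      rw [show d + 1 - (d + 1 - (d + 1 - i)) = d + 1 - i from by omega,
        show d + 1 - (d + 1 - i) = i from by omega]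
  have hsub : ∑ j ∈ range (d + 1 - M), ((GG d (d + 1 - j) : ℤ) : R)
          * (x ^ (d + 1 - (d + 1 - j)) * y ^ (d + 1 - j))
      = ∑ j ∈ range (M + 1), ((GG d (d + 1 - j) : ℤ) : R)
          * (x ^ (d + 1 - (d + 1 - j)) * y ^ (d + 1 - j)) := by
    symm
    apply Finset.sum_subset
    · intro k hk; simp only [mem_range] at *; omega
    · intro j hj hj2
      simp only [mem_range] at hj hj2
      have h1 : d + 1 - (d + 1 - j) = d + 1 - j := by omega
      have h0 : GG d (d + 1 - j) = 0 := by rw [GG, h1]; ring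
      rw [h0]
      norm_num
  rw [hsplit, hmirror, hsub, ← Finset.sum_add_distrib]
  refine Finset.sum_congr rfl fun i hi => ?_
  simp only [mem_range] at hi
  have h2i : 2 * i ≤ d := by omega
  have hneg := GG_neg d i (by omega)
  have hpsi := GG_psi d i (by omega)
  have e1 : d + 1 - (d + 1 - i) = i := by omega
  have e2 : i + (d - 2 * i + 1) = d + 1 - i := by omega
  rw [e1, hneg, hpsi]
  push_cast
  rw [show x ^ i * y ^ i * (x ^ (d - 2 * i + 1) - y ^ (d - 2 * i + 1))
      = x ^ (i + (d - 2 * i + 1)) * y ^ i - x ^ i * y ^ (i + (d - 2 * i + 1)) from by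
    rw [pow_add, pow_add]; ring, e2]
  ring

lemma rhsclosed (d : ℕ) (x y : R) :
    2 * (x - y) ^ 2 * ∑ i ∈ range (d / 2 + 1), (psiN d i : R) * schur2A (d - i) i x y
      = (2*x) ^ (d + 2) + (2*y) ^ (d + 2) - 2 * (x + y) ^ (d + 2) := by
  rw [Finset.mul_sum]
  have step : ∀ i ∈ range (d / 2 + 1),
      2 * (x - y) ^ 2 * ((psiN d i : R) * schur2A (d - i) i x y)
        = 2 * (x - y) * ((psiN d i : R)
            * (x ^ i * y ^ i * (x ^ (d - 2 * i + 1) - y ^ (d - 2 * i + 1)))) := by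
    intro i hi
    simp only [mem_range] at hi
    have h := schur_fact d i (by omega) x y
    linear_combination (2 * (x - y) * (psiN d i : R)) * h
  rw [Finset.sum_congr rfl step, ← Finset.mul_sum, mul_assoc, A_eq_T]
  have h := T_closed d x y
  linear_combination 2 * h

lemma reindex (d : ℕ) (x y : R) :
    ∑ p ∈ (Finset.range (d + 2) ×ˢ Finset.range (d + 2)).filter
        (fun p => p.1 < p.2 ∧ p.1 + p.2 = d + 1),
      (∑ k ∈ Finset.Icc (p.1 + 1) p.2, ((p.1 + p.2).choose k : R)) * schur2A (p.2 - 1) p.1 x y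
      = ∑ i ∈ range (d / 2 + 1), (psiN d i : R) * schur2A (d - i) i x y := by
  refine Finset.sum_nbij' (fun p => p.1) (fun i => (i, d + 1 - i)) ?_ ?_ ?_ ?_ ?_
  · rintro ⟨p1, p2⟩ hp
    simp only [mem_filter, Finset.mem_product, mem_range] at hp
    simp only [mem_range]
    omega
  · intro i hi
    simp only [mem_range] at hi
    simp only [mem_filter, Finset.mem_product, mem_range]
    omega
  · rintro ⟨p1, p2⟩ hp
    simp only [mem_filter, Finset.mem_product, mem_range] at hp
    dsimp only
    rw [show d + 1 - p1 = p2 from by omega]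
  · intro i hi; rfl
  · rintro ⟨p1, p2⟩ hp
    simp only [mem_filter, Finset.mem_product, mem_range] at hp
    dsimp only
    have hp2 : p2 = d + 1 - p1 := by omega
    subst hp2
    rw [show p1 + (d + 1 - p1) = d + 1 from by omega,
      show d + 1 - p1 - 1 = d - p1 from by omega]
    congr 1
    rw [psiN, Nat.cast_sum]

lemma mulId (d : ℕ) (x y : R) :
    2 * (x - y) ^ 2 * hsymA 3 d ![2 * x, x + y, 2 * y]
      = 2 * (x - y) ^ 2 *
          ∑ p ∈ (Finset.range (d + 2) ×ˢ Finset.range (d + 2)).filter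
              (fun p => p.1 < p.2 ∧ p.1 + p.2 = d + 1),
            (∑ k ∈ Finset.Icc (p.1 + 1) p.2, ((p.1 + p.2).choose k : R))
              * schur2A (p.2 - 1) p.1 x y := by
  rw [hsym_eq, closed, reindex, rhsclosed]

end Stmt7Aux

open Stmt7Aux Polynomial in
/-- `ψ_{{i,j}} = ∑_{k=i+1}^{j} C(i+j,k)`, stated as the defining expansion:
`h_d(2x, x+y, 2y) = ∑_{i<j, i+j=d+1} (∑_{k=i+1}^{j} C(i+j,k)) · s_{(j-1,i)}(x,y)`. -/
theorem stmt7 (d : ℕ) (x y : ℚ) :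
    hsym 3 d ![2 * x, x + y, 2 * y]
      = ∑ p ∈ (Finset.range (d + 2) ×ˢ Finset.range (d + 2)).filter
            (fun p => p.1 < p.2 ∧ p.1 + p.2 = d + 1),
          (∑ k ∈ Finset.Icc (p.1 + 1) p.2, ((p.1 + p.2).choose k : ℚ)) *
            schur2 (p.2 - 1) p.1 x y := by
  have hne : (2 * (X - C y) ^ 2 : Polynomial ℚ) ≠ 0 :=
    mul_ne_zero two_ne_zero (pow_ne_zero _ (X_sub_C_ne_zero y))
  have hpoly : hsymA 3 d ![2 * X, X + C y, 2 * C y]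
      = ∑ p ∈ (Finset.range (d + 2) ×ˢ Finset.range (d + 2)).filter
            (fun p => p.1 < p.2 ∧ p.1 + p.2 = d + 1),
          (∑ k ∈ Finset.Icc (p.1 + 1) p.2, ((p.1 + p.2).choose k : Polynomial ℚ)) *
            schur2A (p.2 - 1) p.1 X (C y) :=
    mul_left_cancel₀ hne (mulId d X (C y))
  have := congrArg (Polynomial.evalRingHom x) hpoly
  rw [map_hsymA, map_sum] at this
  have hv : (fun i => (Polynomial.evalRingHom x) (![2 * X, X + C y, 2 * C y] i))
      = ![2 * x, x + y, 2 * y] := by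
    funext i
    fin_cases i <;> simp
  rw [hv] at this
  have hL : hsym 3 d ![2 * x, x + y, 2 * y] = hsymA 3 d ![2 * x, x + y, 2 * y] := rfl
  rw [hL, this]
  refine Finset.sum_congr rfl fun p hp => ?_
  rw [map_mul, map_schur2A, map_sum,
    show schur2 (p.2 - 1) p.1 x y = schur2A (p.2 - 1) p.1 x y from rfl]
  simp
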